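/- Let η > 0, p ∈ (0,1) and ξ > η. Then the function α ↦ erf( ( ξ − (α·p + η) ) / √( 2·(α·p·(1−p) + η) ) ) is convex on the set { α > 0 : α·p + η > ξ }, where erf is the error function. -/

import Mathlib

open MeasureTheory Real
noncomputable def erf (x : ℝ) : ℝ :=
  (2 / Real.sqrt π) * ∫ u in (0:ℝ)..x, Real.exp (-u ^ 2)

lemma erf_hasDerivAt (x : ℝ) :
    HasDerivAt erf (2 / Real.sqrt π * Real.exp (-x ^ 2)) x := by
  have h : Continuous fun u : ℝ => Real.exp (-u ^ 2) := by continuity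
  have h2 := (h.integral_hasStrictDerivAt 0 x).hasDerivAt
  exact h2.const_mul (2 / Real.sqrt π)

lemma erf_mono : Monotone erf := by
  refine monotone_of_deriv_nonneg (fun x => (erf_hasDerivAt x).differentiableAt) (fun x => ?_)
  rw [(erf_hasDerivAt x).deriv]
  positivity

lemma erf_convexOn : ConvexOn ℝ (Set.Iic (0:ℝ)) erf := by
  have hd2 : ∀ x : ℝ, HasDerivAt (fun y => 2 / Real.sqrt π * Real.exp (-y ^ 2))
      (2 / Real.sqrt π * (Real.exp (-x ^ 2) * (-(2 * x)))) x := by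
    intro x
    have hin : HasDerivAt (fun y : ℝ => -y ^ 2) (-(2 * x)) x := by
      exact (hasDerivAt_pow 2 x).neg.congr_deriv (by norm_num)
    exact ((Real.hasDerivAt_exp (-x ^ 2)).comp x hin).const_mul _
  refine convexOn_of_hasDerivWithinAt2_nonneg (convex_Iic 0)
    (fun x _ => (erf_hasDerivAt x).continuousAt.continuousWithinAt)
    (fun x _ => (erf_hasDerivAt x).hasDerivWithinAt)
    (fun x _ => (hd2 x).hasDerivWithinAt) (fun x hx => ?_)
  rw [interior_Iic] at hx
  have hx0 : x < 0 := hx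
  have := Real.exp_pos (-x ^ 2)
  have h1 : (0:ℝ) ≤ 2 / Real.sqrt π := by positivity
  have h2 : (0:ℝ) ≤ Real.exp (-x ^ 2) * (-(2 * x)) :=
    mul_nonneg this.le (by linarith)
  exact mul_nonneg h1 h2


section
variable (η p ξ : ℝ)

noncomputable def zet (α : ℝ) : ℝ :=
  (ξ - (α * p + η)) / Real.sqrt (2 * (α * p * (1 - p) + η))

noncomputable def vv (α : ℝ) : ℝ := 2 * (α * p * (1 - p) + η)

noncomputable def zg (α : ℝ) : ℝ :=
  (-p * vv η p α - p * (1 - p) * (ξ - (α * p + η))) / (vv η p α * Real.sqrt (vv η p α))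

noncomputable def zG (α : ℝ) : ℝ :=
  p * (1 - p) * (2 * p * vv η p α + 3 * (p * (1 - p)) * (ξ - (α * p + η))) /
    (vv η p α ^ 2 * Real.sqrt (vv η p α))

variable {η p ξ}

lemma vv_hasDerivAt (α : ℝ) : HasDerivAt (vv η p) (2 * (p * (1 - p))) α := by
  have : HasDerivAt (fun α : ℝ => 2 * (α * p * (1 - p) + η)) (2 * (p * (1 - p))) α := by
    simpa using ((((hasDerivAt_id α).mul_const p).mul_const (1 - p)).add_const η).const_mul 2
  exact this

lemma vv_pos (hη : 0 < η) (hp : p ∈ Set.Ioo (0:ℝ) 1) {α : ℝ} (hα : 0 < α) :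
    0 < vv η p α := by
  have h1 : 0 < p := hp.1
  have h2 : p < 1 := hp.2
  have h3 : 0 < α * p * (1 - p) := by
    apply mul_pos (mul_pos hα h1); linarith
  unfold vv; nlinarith

lemma sqrt_vv_hasDerivAt (hη : 0 < η) (hp : p ∈ Set.Ioo (0:ℝ) 1) {α : ℝ} (hα : 0 < α) :
    HasDerivAt (fun α => Real.sqrt (vv η p α))
      (1 / (2 * Real.sqrt (vv η p α)) * (2 * (p * (1 - p)))) α :=
  (Real.hasDerivAt_sqrt (vv_pos hη hp hα).ne').comp α (vv_hasDerivAt α)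

lemma zet_hasDerivAt (hη : 0 < η) (hp : p ∈ Set.Ioo (0:ℝ) 1) {α : ℝ} (hα : 0 < α) :
    HasDerivAt (zet η p ξ) (zg η p ξ α) α := by
  have hv := vv_pos hη hp hα
  have hs : 0 < Real.sqrt (vv η p α) := Real.sqrt_pos.mpr hv
  have hn : HasDerivAt (fun α : ℝ => ξ - (α * p + η)) (-p) α := by
    simpa using (((hasDerivAt_id α).mul_const p).add_const η).const_sub ξ
  have hd := hn.div (sqrt_vv_hasDerivAt hη hp hα) hs.ne'
  have heq : (-p * Real.sqrt (vv η p α) -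
        (ξ - (α * p + η)) * (1 / (2 * Real.sqrt (vv η p α)) * (2 * (p * (1 - p))))) /
        Real.sqrt (vv η p α) ^ 2 = zg η p ξ α := by
    unfold zg
    set s := Real.sqrt (vv η p α) with hsdef
    have h2 : vv η p α = s ^ 2 := (Real.sq_sqrt hv.le).symm
    rw [h2]
    field_simp
  rw [heq] at hd
  exact hd

lemma zg_hasDerivAt (hη : 0 < η) (hp : p ∈ Set.Ioo (0:ℝ) 1) {α : ℝ} (hα : 0 < α) :
    HasDerivAt (zg η p ξ) (zG η p ξ α) α := by
  have hv := vv_pos hη hp hα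
  have hs : 0 < Real.sqrt (vv η p α) := Real.sqrt_pos.mpr hv
  have hn : HasDerivAt (fun α : ℝ => ξ - (α * p + η)) (-p) α := by
    simpa using (((hasDerivAt_id α).mul_const p).add_const η).const_sub ξ
  have hN : HasDerivAt (fun α => -p * vv η p α - p * (1 - p) * (ξ - (α * p + η)))
      (-p * (2 * (p * (1 - p))) - p * (1 - p) * (-p)) α :=
    ((vv_hasDerivAt α).const_mul (-p)).sub (hn.const_mul (p * (1 - p)))
  have hD : HasDerivAt (fun α => vv η p α * Real.sqrt (vv η p α))
      (2 * (p * (1 - p)) * Real.sqrt (vv η p α) +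
        vv η p α * (1 / (2 * Real.sqrt (vv η p α)) * (2 * (p * (1 - p))))) α :=
    (vv_hasDerivAt α).mul (sqrt_vv_hasDerivAt hη hp hα)
  have hDne : vv η p α * Real.sqrt (vv η p α) ≠ 0 := by positivity
  have hd := hN.div hD hDne
  have h2 : Real.sqrt (vv η p α) ^ 2 = vv η p α := Real.sq_sqrt hv.le
  have heq : ((-p * (2 * (p * (1 - p))) - p * (1 - p) * (-p)) *
        (vv η p α * Real.sqrt (vv η p α)) -
        (-p * vv η p α - p * (1 - p) * (ξ - (α * p + η))) *
          (2 * (p * (1 - p)) * Real.sqrt (vv η p α) +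
            vv η p α * (1 / (2 * Real.sqrt (vv η p α)) * (2 * (p * (1 - p)))))) /
        (vv η p α * Real.sqrt (vv η p α)) ^ 2 = zG η p ξ α := by
    unfold zG
    set s := Real.sqrt (vv η p α) with hsdef
    have h3 : vv η p α = s ^ 2 := (Real.sq_sqrt hv.le).symm
    rw [h3]
    field_simp
    ring
  rw [heq] at hd
  exact hd

lemma zG_nonneg (hη : 0 < η) (hp : p ∈ Set.Ioo (0:ℝ) 1) (hξ : η < ξ) {α : ℝ} (hα : 0 < α) :
    0 ≤ zG η p ξ α := by
  have hv := vv_pos hη hp hα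
  have hs : 0 < Real.sqrt (vv η p α) := Real.sqrt_pos.mpr hv
  have h1 : 0 < p := hp.1
  have h2 : p < 1 := hp.2
  apply div_nonneg _ (by positivity)
  have key : 0 ≤ 2 * p * vv η p α + 3 * (p * (1 - p)) * (ξ - (α * p + η)) := by
    unfold vv
    nlinarith [mul_pos (mul_pos hα (mul_pos h1 h1)) (sub_pos.mpr h2), mul_pos h1 hη,
      mul_pos (mul_pos h1 (sub_pos.mpr h2)) (sub_pos.mpr hξ)]
  exact mul_nonneg (mul_nonneg h1.le (by linarith)) key

end

open Set in
/-- Convexity in the number of released molecules `α` of `erf(ζ(α))` on the set where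
`α > 0` and `αp + η > ξ`. -/
theorem erf_zeta_convexOn (η p ξ : ℝ) (hη : 0 < η) (hp : p ∈ Set.Ioo (0:ℝ) 1) (hξ : η < ξ) :
    ConvexOn ℝ {α : ℝ | 0 < α ∧ ξ < α * p + η}
      (fun α =>
        erf ((ξ - (α * p + η)) / Real.sqrt (2 * (α * p * (1 - p) + η)))) := by
  set m := (ξ - η) / p with hm_def
  have hm : 0 < m := div_pos (by linarith) hp.1
  have hset : {α : ℝ | 0 < α ∧ ξ < α * p + η} = Ioi m := by
    ext α
    simp only [mem_setOf_eq, mem_Ioi]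
    constructor
    · rintro ⟨h0, h1⟩
      rw [hm_def, div_lt_iff₀ hp.1]
      linarith
    · intro h
      have h1 : ξ - η < α * p := by
        rw [hm_def, div_lt_iff₀ hp.1] at h
        exact h
      exact ⟨lt_trans hm h, by linarith⟩
  have hpos : ∀ α : ℝ, α ∈ Ioi m → 0 < α := fun α hα => lt_trans hm hα
  have hζconv : ConvexOn ℝ (Ioi m) (zet η p ξ) := by
    refine convexOn_of_hasDerivWithinAt2_nonneg (convex_Ioi m)
      (fun α hα => (zet_hasDerivAt hη hp (hpos α hα)).continuousAt.continuousWithinAt)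
      (f' := zg η p ξ) (f'' := zG η p ξ) (fun α hα => ?_) (fun α hα => ?_) (fun α hα => ?_)
    · rw [interior_Ioi] at hα
      exact (zet_hasDerivAt hη hp (hpos α hα)).hasDerivWithinAt
    · rw [interior_Ioi] at hα
      exact (zg_hasDerivAt hη hp (hpos α hα)).hasDerivWithinAt
    · rw [interior_Ioi] at hα
      exact zG_nonneg hη hp hξ (hpos α hα)
  have hζnonpos : ∀ α : ℝ, α ∈ Ioi m → zet η p ξ α ≤ 0 := by
    intro α hα
    have h1 : ξ - η < α * p := by
      rw [mem_Ioi, hm_def, div_lt_iff₀ hp.1] at hα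
      exact hα
    exact div_nonpos_iff.mpr (Or.inr ⟨by linarith, Real.sqrt_nonneg _⟩)
  rw [hset]
  refine ⟨convex_Ioi m, fun x hx y hy a b ha hb hab => ?_⟩
  show erf (zet η p ξ (a • x + b • y)) ≤ a • erf (zet η p ξ x) + b • erf (zet η p ξ y)
  have h1 := hζconv.2 hx hy ha hb hab
  have h2 : erf (zet η p ξ (a • x + b • y)) ≤ erf (a • zet η p ξ x + b • zet η p ξ y) :=
    erf_mono h1
  have h3 := erf_convexOn.2 (Set.mem_Iic.mpr (hζnonpos x hx)) (Set.mem_Iic.mpr (hζnonpos y hy))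
    ha hb hab
  exact h2.trans h3
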